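/- Under Assumption 1 with 0 < λ < Δ/K²: let θ₁, θ₂ ∈ ℝ^d be arbitrary and y = (…, y_{−1}, y_0, y_1, …) ∈ (ℝ^m)^ℤ a fixed trajectory with sup_{k∈ℤ}‖y_k‖ ≤ M. Then there exist constants κ > 0 and N ∈ ℕ, depending only on λ, Δ, b, K and M, such that for all n ≥ N, P(Z_{0,n}^{θ₁,y} ≠ Z_{0,n}^{θ₂,y}) ≤ (V(θ₁) + V(θ₂) + 3)/2 · e^{−κn}, where V(θ) = exp(a‖θ‖²) with a > 0 the constant from the drift lemma. -/

import Mathlib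

set_option maxHeartbeats 1000000


open MeasureTheory ProbabilityTheory Filter Real
open scoped RealInnerProductSpace ENNReal

noncomputable section

/-- `ℝ^d` as Euclidean space. -/
abbrev Ed (d : ℕ) : Type := EuclideanSpace ℝ (Fin d)

/-- The standard Gaussian measure on `ℝ^d` (mean `0`, identity covariance). -/
def stdGaussian (d : ℕ) : Measure (Ed d) :=
  (Measure.pi fun _ : Fin d => gaussianReal 0 1).map
    (MeasurableEquiv.toLp 2 (Fin d → ℝ))

/-- The SGLD parametric transition kernel
`Q(y, θ, A) = P(θ − λH(θ,y) + √(2λ)ξ₀ ∈ A)`, as a measure in its last argument. -/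
def kernelQ {d m : ℕ} (H : Ed d → Ed m → Ed d) (lam : ℝ) (y : Ed m) (θ : Ed d) :
    Measure (Ed d) :=
  (stdGaussian d).map (fun z => θ - lam • H θ y + (Real.sqrt (2 * lam)) • z)

/-- The auxiliary iterated-random-function process `Z_{s,t}^{init,y}`:
`Z_{s,t} = init` for `t ≤ s` and `Z_{s,t} = T(y_{t−1}, Z_{s,t−1}, ε_t)` for `t > s`. -/
def Zproc {Ω : Type*} {d m : ℕ} (T : Ed m → Ed d → ℝ → Ed d)
    (eps : ℤ → Ω → ℝ) (y : ℤ → Ω → Ed m) (s : ℕ) (init : Ω → Ed d) :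
    ℕ → Ω → Ed d
  | 0 => init
  | (t + 1) => fun ω => if t + 1 ≤ s then init ω
      else T (y (t : ℤ) ω) (Zproc T eps y s init t ω) (eps ((t : ℤ) + 1) ω)

/-- (Quenched coupling.) Under Assumption 1 with `0 < λ < Δ/K²`,
for the iterated-random-function representation of SGLD along any fixed data
trajectory bounded by `M`, there exist `κ > 0` and `N ∈ ℕ` (depending only on
`λ, Δ, b, K, M`) such that for all `n ≥ N` and all initial values `θ₁, θ₂`,
`P(Z_{0,n}^{θ₁,y} ≠ Z_{0,n}^{θ₂,y}) ≤ (V(θ₁)+V(θ₂)+3)/2 · e^{−κn}`,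
where `V(θ) = exp(a‖θ‖²)` with `a` from the drift lemma. -/
theorem stmt10 {Ω : Type*} {mΩ : MeasurableSpace Ω} (P : Measure Ω)
    [IsProbabilityMeasure P] {d m : ℕ}
    (H : Ed d → Ed m → Ed d) (hH : Measurable (Function.uncurry H))
    (Δ b K M : ℝ)
    (hΔ : 0 < Δ) (hb : 0 < b)
    (hdis : ∀ (θ : Ed d) (y : Ed m), Δ * ‖θ‖ ^ 2 - b ≤ ⟪H θ y, θ⟫)
    (hK : Δ / Real.sqrt 2 < K)
    (hlin : ∀ (θ : Ed d) (y : Ed m), ‖H θ y‖ ≤ K * (‖θ‖ + ‖y‖ + 1))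
    (hM : 0 < M)
    (lam : ℝ) (hlam : 0 < lam) (hlam2 : lam < Δ / K ^ 2)
    -- the drift constants:
    (a γ C : ℝ) (ha : 0 < a) (hγ : γ ∈ Set.Ioo (0 : ℝ) 1) (hC : 1 ≤ C)
    (hdrift : ∀ (θ : Ed d) (y : Ed m), ‖y‖ ≤ M →
      ∫⁻ z, ENNReal.ofReal (Real.exp (a * ‖z‖ ^ 2)) ∂(kernelQ H lam y θ)
        ≤ ENNReal.ofReal (γ * Real.exp (a * ‖θ‖ ^ 2) + C))
    -- the radius `R` of the small set, chosen large enough as in the proof: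
    (R : ℝ) (hR : 0 < R)
    (hRbig : ∃ γ' : ℝ, γ < γ' ∧ γ' < 1 ∧ 2 * C < (γ' - γ) * Real.exp (a / 2 * R ^ 2))
    -- i.i.d. uniform innovations on [0,1]:
    (eps : ℤ → Ω → ℝ) (hεm : ∀ t, Measurable (eps t))
    (hεi : iIndepFun eps P)
    (hεu : ∀ t, Measure.map (eps t) P = volume.restrict (Set.Icc (0 : ℝ) 1))
    -- the representation map `T` and its coupling property on the small set:
    (T : Ed m → Ed d → ℝ → Ed d)
    (hTm : Measurable (fun p : Ed m × Ed d × ℝ => T p.1 p.2.1 p.2.2))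
    (αR : ℝ) (hαR : αR ∈ Set.Ioo (0 : ℝ) 1)
    (hTrep : ∀ (y : Ed m) (θ : Ed d), ‖y‖ ≤ M →
      Measure.map (T y θ) (volume.restrict (Set.Icc (0 : ℝ) 1)) = kernelQ H lam y θ)
    (hTc : ∀ u : ℝ, 0 ≤ u → u ≤ αR → ∀ (y : Ed m) (θ₁ θ₂ : Ed d),
      ‖y‖ ≤ M → ‖θ₁‖ ≤ R → ‖θ₂‖ ≤ R → T y θ₁ u = T y θ₂ u) :
    ∃ κ : ℝ, 0 < κ ∧ ∃ N : ℕ, ∀ (θ₁ θ₂ : Ed d) (y : ℤ → Ed m),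
      (∀ k : ℤ, ‖y k‖ ≤ M) → ∀ n : ℕ, N ≤ n →
        (P {ω | Zproc T eps (fun k _ => y k) 0 (fun _ => θ₁) n ω
            ≠ Zproc T eps (fun k _ => y k) 0 (fun _ => θ₂) n ω}).toReal
          ≤ (Real.exp (a * ‖θ₁‖ ^ 2) + Real.exp (a * ‖θ₂‖ ^ 2) + 3) / 2
            * Real.exp (-κ * n) := by
  classical
  obtain ⟨hγ0, hγ1⟩ := hγ
  obtain ⟨hα0, hα1⟩ := hαR
  obtain ⟨γ', hγγ', hγ'1, hRb⟩ := hRbig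
  have hC0 : (0:ℝ) < C := lt_of_lt_of_le one_pos hC
  set Wb : ℝ := Real.exp (a * R ^ 2) with hWbdef
  have hWb1 : 1 ≤ Wb := Real.one_le_exp (by positivity)
  have hWb0 : 0 < Wb := lt_of_lt_of_le one_pos hWb1
  set D : ℝ := 2 * γ * Wb + 2 * C with hDdef
  have hD0 : 0 < D := by nlinarith [mul_pos hγ0 hWb0]
  set β : ℝ := min 1 (αR / D) with hβdef
  have hβ0 : 0 < β := lt_min one_pos (div_pos hα0 hD0)
  have hβ1 : β ≤ 1 := min_le_left _ _
  have hβD : β * D ≤ αR := by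
    have h := min_le_right 1 (αR / D)
    rw [hβdef]
    calc min 1 (αR / D) * D ≤ (αR / D) * D := by nlinarith
    _ = αR := by field_simp
  have hβD' : β * (2 * γ * Wb + 2 * C) ≤ αR := by rw [← hDdef]; exact hβD
  set ρ₁ : ℝ := 1 - αR / 2 with hρ₁def
  set ρ₂ : ℝ := (2 + 2*β*C + β*γ*Wb) / (2 + β*Wb) with hρ₂def
  have hden : (0:ℝ) < 2 + β*Wb := by nlinarith [mul_pos hβ0 hWb0]
  have h2C : 2*C < (1-γ)*Wb := by
    have h1 : Real.exp (a/2 * R^2) ≤ Wb := by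
      rw [hWbdef]
      apply Real.exp_le_exp.mpr
      nlinarith
    have h2 : (γ' - γ) * Real.exp (a/2*R^2) ≤ (1-γ) * Wb := by
      have h3 := (Real.exp_pos (a/2*R^2)).le
      nlinarith
    linarith
  have hρ₂1 : ρ₂ < 1 := by
    rw [hρ₂def, div_lt_one hden]
    nlinarith [mul_pos hβ0 hWb0, mul_pos hβ0 hC0]
  have hρ₂0 : 0 < ρ₂ := by
    rw [hρ₂def]
    apply div_pos _ hden
    nlinarith [mul_pos hβ0 hC0, mul_nonneg (mul_nonneg hβ0.le hγ0.le) hWb0.le]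
  set ρ : ℝ := max ρ₁ ρ₂ with hρdef
  have hρ0 : 0 < ρ := lt_of_lt_of_le hρ₂0 (le_max_right _ _)
  have hρ1 : ρ < 1 := max_lt (by rw [hρ₁def]; linarith) hρ₂1
  have hρ₁ρ : ρ₁ ≤ ρ := le_max_left _ _
  have hρ₂ρ : ρ₂ ≤ ρ := le_max_right _ _
  have hρ₁' : 1 - αR / 2 ≤ ρ := by rw [← hρ₁def]; exact hρ₁ρ
  clear_value Wb D β ρ₁ ρ₂ ρ
  refine ⟨-Real.log ρ, neg_pos.mpr (Real.log_neg hρ0 hρ1), 0, ?_⟩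
  intro θ₁ θ₂ y hy n _
  set ν : Measure ℝ := volume.restrict (Set.Icc (0:ℝ) 1) with hνdef
  haveI hνP : IsProbabilityMeasure ν := by
    constructor
    rw [hνdef, Measure.restrict_apply_univ, Real.volume_Icc]
    norm_num
  set Vr : Ed d → ℝ := fun z => Real.exp (a * ‖z‖^2) with hVrdef
  have hVr1 : ∀ z, 1 ≤ Vr z := by
    intro z
    rw [hVrdef]
    exact Real.one_le_exp (by positivity)
  have hVr0 : ∀ z, 0 ≤ Vr z := fun z => le_trans zero_le_one (hVr1 z)
  have hVrle : ∀ z : Ed d, ‖z‖ ≤ R → Vr z ≤ Wb := by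
    intro z hz
    rw [hVrdef, hWbdef]
    apply Real.exp_le_exp.mpr
    have h : ‖z‖^2 ≤ R^2 := by nlinarith [norm_nonneg z]
    exact mul_le_mul_of_nonneg_left h ha.le
  have hVrW : ∀ z : Ed d, R < ‖z‖ → Wb ≤ Vr z := by
    intro z hz
    rw [hVrdef, hWbdef]
    apply Real.exp_le_exp.mpr
    have h : R^2 ≤ ‖z‖^2 := by nlinarith [norm_nonneg z, hR.le]
    exact mul_le_mul_of_nonneg_left h ha.le
  have hVrm : Measurable Vr := by
    rw [hVrdef]
    exact (Real.continuous_exp.comp (continuous_const.mul ((continuous_norm).pow 2))).measurable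
  have hβVC : ∀ w : Ed d, 0 ≤ β * (γ * Vr w + C) := by
    intro w
    apply mul_nonneg hβ0.le
    have := mul_nonneg hγ0.le (hVr0 w)
    linarith
  have h2α : (0:ℝ) ≤ 2 * (1 - αR) := by nlinarith
  set G : Ed d × Ed d → ℝ≥0∞ := fun p => ENNReal.ofReal (2 + β * (Vr p.1 + Vr p.2)) with hGdef
  have hGm : Measurable G := by
    rw [hGdef]
    exact ENNReal.measurable_ofReal.comp
      (measurable_const.add (measurable_const.mul
        ((hVrm.comp measurable_fst).add (hVrm.comp measurable_snd))))
  set Zp : Ed d → ℕ → Ω → Ed d := fun θ => Zproc T eps (fun k _ => y k) 0 fun _ => θ with hZpdef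
  have Zrec : ∀ (θ : Ed d) (t : ℕ) (ω : Ω),
      Zp θ (t+1) ω = T (y t) (Zp θ t ω) (eps ((t:ℤ)+1) ω) := by
    intro θ t ω
    rw [hZpdef]
    show Zproc T eps (fun k _ => y k) 0 (fun _ => θ) (t+1) ω = _
    rw [Zproc]
    simp
  have hZ0 : ∀ (θ : Ed d) (ω : Ω), Zp θ 0 ω = θ := by
    intro θ ω
    rw [hZpdef]
    rfl
  show (P {ω | Zp θ₁ n ω ≠ Zp θ₂ n ω}).toReal
      ≤ (Vr θ₁ + Vr θ₂ + 3) / 2 * Real.exp (-(-Real.log ρ) * (n:ℝ))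
  clear_value ν Vr G Zp
  have hTym : ∀ k : ℤ, Measurable fun p : Ed d × ℝ => T (y k) p.1 p.2 :=
    fun k => hTm.comp (measurable_const.prodMk measurable_id)
  have hTum : ∀ (k : ℤ) (z : Ed d), Measurable (T (y k) z) :=
    fun k z => (hTym k).comp (measurable_const.prodMk measurable_id)
  have hZm : ∀ θ t, Measurable (Zp θ t) := by
    intro θ t
    induction t with
    | zero =>
      have h : Zp θ 0 = fun _ => θ := funext fun ω => hZ0 θ ω
      rw [h]; exact measurable_const
    | succ t ih =>
      have h : Zp θ (t+1) = (fun p : Ed d × ℝ => T (y t) p.1 p.2)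
          ∘ fun ω => (Zp θ t ω, eps ((t:ℤ)+1) ω) := funext fun ω => Zrec θ t ω
      rw [h]
      exact (hTym t).comp (ih.prodMk (hεm _))
  -- drift bound for the representation map
  have hTint : ∀ (k : ℤ) (z : Ed d), ∫⁻ u, ENNReal.ofReal (Vr (T (y k) z u)) ∂ν
      ≤ ENNReal.ofReal (γ * Vr z + C) := by
    intro k z
    have h1 : ∫⁻ u, ENNReal.ofReal (Vr (T (y k) z u)) ∂ν
        = ∫⁻ w, ENNReal.ofReal (Vr w) ∂(ν.map (T (y k) z)) :=
      (lintegral_map (ENNReal.measurable_ofReal.comp hVrm) (hTum k z)).symm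
    rw [h1, hTrep (y k) z (hy k)]
    simp only [hVrdef]
    exact hdrift z (y k) (hy k)
  have hI2 : ∀ (k : ℤ) (w : Ed d), ∫⁻ u, ENNReal.ofReal (β * Vr (T (y k) w u)) ∂ν
      ≤ ENNReal.ofReal (β * (γ * Vr w + C)) := by
    intro k w
    have hmeas : Measurable fun u => ENNReal.ofReal (Vr (T (y k) w u)) :=
      ENNReal.measurable_ofReal.comp (hVrm.comp (hTum k w))
    calc ∫⁻ u, ENNReal.ofReal (β * Vr (T (y k) w u)) ∂ν
        = ∫⁻ u, ENNReal.ofReal β * ENNReal.ofReal (Vr (T (y k) w u)) ∂ν := by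
          congr 1; funext u; rw [ENNReal.ofReal_mul hβ0.le]
      _ = ENNReal.ofReal β * ∫⁻ u, ENNReal.ofReal (Vr (T (y k) w u)) ∂ν :=
          lintegral_const_mul _ hmeas
      _ ≤ ENNReal.ofReal β * ENNReal.ofReal (γ * Vr w + C) :=
          mul_le_mul_right (hTint k w) _
      _ = ENNReal.ofReal (β * (γ * Vr w + C)) := (ENNReal.ofReal_mul hβ0.le).symm
  have hν_c : ν (Set.Icc (0:ℝ) αR)ᶜ = ENNReal.ofReal (1 - αR) := by
    rw [hνdef, Measure.restrict_apply measurableSet_Icc.compl]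
    have hset : (Set.Icc (0:ℝ) αR)ᶜ ∩ Set.Icc 0 1 = Set.Ioc αR 1 := by
      ext x
      simp only [Set.mem_inter_iff, Set.mem_compl_iff, Set.mem_Icc, Set.mem_Ioc, not_and, not_le]
      constructor
      · rintro ⟨h1, h2, h3⟩; exact ⟨h1 h2, h3⟩
      · rintro ⟨h1, h2⟩; exact ⟨fun _ => h1, le_trans hα0.le h1.le, h2⟩
    rw [hset, Real.volume_Ioc]
  set Φ : ℕ → ℝ≥0∞ := fun t => ∫⁻ ω,
    (if Zp θ₁ t ω = Zp θ₂ t ω then 0 else G (Zp θ₁ t ω, Zp θ₂ t ω)) ∂P with hΦdef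
  clear_value Φ
  have hIm : Measurable (fun p : Ed d × Ed d => if p.1 = p.2 then (0:ℝ≥0∞) else G p) :=
    Measurable.ite (measurableSet_eq_fun measurable_fst measurable_snd) measurable_const hGm
  -- the one-step contraction
  have hstep : ∀ t : ℕ, Φ (t+1) ≤ ENNReal.ofReal ρ * Φ t := by
    intro t
    set f : Ed d × Ed d → ℝ → ℝ≥0∞ := fun z u =>
      if z.1 = z.2 then 0 else if T (y t) z.1 u = T (y t) z.2 u then 0
      else G (T (y t) z.1 u, T (y t) z.2 u) with hfdef
    clear_value f
    have hT1 : Measurable fun q : (Ed d × Ed d) × ℝ => T (y t) q.1.1 q.2 :=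
      (hTym t).comp (measurable_fst.fst.prodMk measurable_snd)
    have hT2 : Measurable fun q : (Ed d × Ed d) × ℝ => T (y t) q.1.2 q.2 :=
      (hTym t).comp (measurable_fst.snd.prodMk measurable_snd)
    have hfm : Measurable (fun q : (Ed d × Ed d) × ℝ => f q.1 q.2) := by
      rw [hfdef]
      apply Measurable.ite
      · exact measurableSet_eq_fun measurable_fst.fst measurable_fst.snd
      · exact measurable_const
      apply Measurable.ite
      · exact measurableSet_eq_fun hT1 hT2
      · exact measurable_const
      · exact hGm.comp (hT1.prodMk hT2)
    have hpairm : Measurable fun ω => (Zp θ₁ t ω, Zp θ₂ t ω) :=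
      (hZm θ₁ t).prodMk (hZm θ₂ t)
    have hIndep : IndepFun (fun ω => (Zp θ₁ t ω, Zp θ₂ t ω)) (eps ((t:ℤ)+1)) P := by
      set 𝔖 : MeasurableSpace Ω :=
        ⨆ i ∈ Set.Icc (1:ℤ) (t:ℤ), MeasurableSpace.comap (eps i) inferInstance with hSdef
      have hS : ∀ (θ : Ed d) (k : ℕ), k ≤ t → Measurable[𝔖] (Zp θ k) := by
        intro θ k
        induction k with
        | zero =>
          intro _
          have h : Zp θ 0 = fun _ => θ := funext fun ω => hZ0 θ ω
          rw [h]; exact measurable_const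
        | succ k ih =>
          intro hk
          have h1 : Measurable[𝔖] (eps ((k:ℤ)+1)) := by
            rw [measurable_iff_comap_le, hSdef]
            exact le_biSup (fun i => MeasurableSpace.comap (eps i) inferInstance)
              (show ((k:ℤ)+1) ∈ Set.Icc (1:ℤ) (t:ℤ) by simp only [Set.mem_Icc]; omega)
          have h2 : Zp θ (k+1) = (fun p : Ed d × ℝ => T (y k) p.1 p.2)
              ∘ fun ω => (Zp θ k ω, eps ((k:ℤ)+1) ω) := funext fun ω => Zrec θ k ω
          rw [h2]
          exact Measurable.comp (hTym k) (Measurable.prodMk (ih (by omega)) h1)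
      have hdisj : Disjoint (Set.Icc (1:ℤ) (t:ℤ)) {(t:ℤ)+1} := by
        simp only [Set.disjoint_singleton_right, Set.mem_Icc]
        omega
      have h1 : Indep 𝔖
          (⨆ i ∈ ({(t:ℤ)+1} : Set ℤ), MeasurableSpace.comap (eps i) inferInstance) P :=
        indep_iSup_of_disjoint (fun i => measurable_iff_comap_le.mp (hεm i)) hεi hdisj
      have h2 := indep_of_indep_of_le_left h1
        (measurable_iff_comap_le.mp ((hS θ₁ t le_rfl).prodMk (hS θ₂ t le_rfl)))
      exact indep_of_indep_of_le_right h2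
        (le_biSup (fun i => MeasurableSpace.comap (eps i) inferInstance)
          (Set.mem_singleton ((t:ℤ)+1)))
    have hjoint : P.map (fun ω => ((Zp θ₁ t ω, Zp θ₂ t ω), eps ((t:ℤ)+1) ω))
        = (P.map fun ω => (Zp θ₁ t ω, Zp θ₂ t ω)).prod ν := by
      rw [← hεu ((t:ℤ)+1)]
      exact (indepFun_iff_map_prod_eq_prod_map_map hpairm.aemeasurable
        (hεm _).aemeasurable).mp hIndep
    have hptw : ∀ ω, (if Zp θ₁ (t+1) ω = Zp θ₂ (t+1) ω then (0:ℝ≥0∞)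
        else G (Zp θ₁ (t+1) ω, Zp θ₂ (t+1) ω))
        = f (Zp θ₁ t ω, Zp θ₂ t ω) (eps ((t:ℤ)+1) ω) := by
      intro ω
      by_cases h : Zp θ₁ t ω = Zp θ₂ t ω
      · have e : Zp θ₁ (t+1) ω = Zp θ₂ (t+1) ω := by rw [Zrec, Zrec, h]
        rw [if_pos e, hfdef]
        simp [h]
      · rw [hfdef]
        simp only [Zrec]
        simp [h]
    -- the key one-step integral bound
    have hinner : ∀ z : Ed d × Ed d, ∫⁻ u, f z u ∂ν
        ≤ ENNReal.ofReal ρ * (if z.1 = z.2 then 0 else G z) := by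
      intro z
      by_cases hz : z.1 = z.2
      · simp [hfdef, hz]
      · rw [if_neg hz]
        have hg2m : Measurable fun u => ENNReal.ofReal (β * Vr (T (y t) z.1 u)) :=
          ENNReal.measurable_ofReal.comp (measurable_const.mul (hVrm.comp (hTum t z.1)))
        have hg3m : Measurable fun u => ENNReal.ofReal (β * Vr (T (y t) z.2 u)) :=
          ENNReal.measurable_ofReal.comp (measurable_const.mul (hVrm.comp (hTum t z.2)))
        have hGsplit : ∀ w₁ w₂ : Ed d, G (w₁, w₂) = ENNReal.ofReal 2
            + ENNReal.ofReal (β * Vr w₁) + ENNReal.ofReal (β * Vr w₂) := by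
          intro w₁ w₂
          rw [hGdef,
            ← ENNReal.ofReal_add (by norm_num) (mul_nonneg hβ0.le (hVr0 w₁)),
            ← ENNReal.ofReal_add
              (by linarith [mul_nonneg hβ0.le (hVr0 w₁)])
              (mul_nonneg hβ0.le (hVr0 w₂))]
          congr 1
          ring
        have hV0 : 0 ≤ Vr z.1 + Vr z.2 := by linarith [hVr0 z.1, hVr0 z.2]
        by_cases hball : ‖z.1‖ ≤ R ∧ ‖z.2‖ ≤ R
        · -- coupling case : both in the small set
          have hfb : ∀ u, f z u ≤ (if u ∈ Set.Icc (0:ℝ) αR then 0 else ENNReal.ofReal 2)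
              + ENNReal.ofReal (β * Vr (T (y t) z.1 u))
              + ENNReal.ofReal (β * Vr (T (y t) z.2 u)) := by
            intro u
            by_cases hu : u ∈ Set.Icc (0:ℝ) αR
            · have he : T (y t) z.1 u = T (y t) z.2 u :=
                hTc u hu.1 hu.2 (y t) z.1 z.2 (hy t) hball.1 hball.2
              rw [hfdef]
              simp [hz, he]
            · rw [hfdef]
              simp only [if_neg hz, if_neg hu]
              split
              · exact zero_le
              · rw [hGsplit]
          have hg1m : Measurable fun u : ℝ =>
              (if u ∈ Set.Icc (0:ℝ) αR then (0:ℝ≥0∞) else ENNReal.ofReal 2) :=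
            Measurable.ite measurableSet_Icc measurable_const measurable_const
          have hI1 : ∫⁻ u, (if u ∈ Set.Icc (0:ℝ) αR then (0:ℝ≥0∞) else ENNReal.ofReal 2) ∂ν
              = ENNReal.ofReal 2 * ENNReal.ofReal (1 - αR) := by
            have hfun : (fun u => if u ∈ Set.Icc (0:ℝ) αR then (0:ℝ≥0∞) else ENNReal.ofReal 2)
                = (Set.Icc (0:ℝ) αR)ᶜ.indicator (fun _ => ENNReal.ofReal 2) := by
              funext u
              by_cases h : u ∈ Set.Icc (0:ℝ) αR <;> simp [h]
            rw [hfun, lintegral_indicator measurableSet_Icc.compl, setLIntegral_const, hν_c]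
          calc ∫⁻ u, f z u ∂ν
              ≤ ∫⁻ u, ((if u ∈ Set.Icc (0:ℝ) αR then 0 else ENNReal.ofReal 2)
                + ENNReal.ofReal (β * Vr (T (y t) z.1 u))
                + ENNReal.ofReal (β * Vr (T (y t) z.2 u))) ∂ν := lintegral_mono hfb
            _ = (∫⁻ u, (if u ∈ Set.Icc (0:ℝ) αR then (0:ℝ≥0∞) else ENNReal.ofReal 2) ∂ν)
                + (∫⁻ u, ENNReal.ofReal (β * Vr (T (y t) z.1 u)) ∂ν)
                + (∫⁻ u, ENNReal.ofReal (β * Vr (T (y t) z.2 u)) ∂ν) := by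
                rw [lintegral_add_left (show Measurable fun u => (if u ∈ Set.Icc (0:ℝ) αR then (0:ℝ≥0∞) else ENNReal.ofReal 2) + ENNReal.ofReal (β * Vr (T (y t) z.1 u)) from hg1m.add hg2m), lintegral_add_left hg1m]
            _ ≤ ENNReal.ofReal 2 * ENNReal.ofReal (1 - αR)
                + ENNReal.ofReal (β * (γ * Vr z.1 + C))
                + ENNReal.ofReal (β * (γ * Vr z.2 + C)) := by
                rw [hI1]
                exact add_le_add (add_le_add le_rfl (hI2 t z.1)) (hI2 t z.2)
            _ = ENNReal.ofReal (2 * (1 - αR) + β * (γ * Vr z.1 + C) + β * (γ * Vr z.2 + C)) := by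
                rw [← ENNReal.ofReal_mul (by norm_num),
                  ← ENNReal.ofReal_add h2α (hβVC z.1),
                  ← ENNReal.ofReal_add (add_nonneg h2α (hβVC z.1)) (hβVC z.2)]
            _ ≤ ENNReal.ofReal (ρ * (2 + β * (Vr z.1 + Vr z.2))) := by
                apply ENNReal.ofReal_le_ofReal
                have h1 : Vr z.1 ≤ Wb := hVrle _ hball.1
                have h2 : Vr z.2 ≤ Wb := hVrle _ hball.2
                have e1 : β * γ * Vr z.1 ≤ β * γ * Wb :=
                  mul_le_mul_of_nonneg_left h1 (mul_nonneg hβ0.le hγ0.le)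
                have e2 : β * γ * Vr z.2 ≤ β * γ * Wb :=
                  mul_le_mul_of_nonneg_left h2 (mul_nonneg hβ0.le hγ0.le)
                have hkey : 2 * (1 - αR) + β * (γ * Vr z.1 + C) + β * (γ * Vr z.2 + C)
                    ≤ 2 - αR := by linarith [e1, e2, hβD']
                have hkey3 : 2 - αR ≤ ρ * 2 := by linarith [hρ₁']
                have h8 : ρ * 2 ≤ ρ * (2 + β * (Vr z.1 + Vr z.2)) :=
                  mul_le_mul_of_nonneg_left
                    (by linarith [mul_nonneg hβ0.le hV0]) hρ0.le
                linarith
            _ = ENNReal.ofReal ρ * G z := by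
                rw [hGdef, ENNReal.ofReal_mul hρ0.le]
        · -- far case : drift contraction
          have hWle : Wb ≤ Vr z.1 + Vr z.2 := by
            rcases not_and_or.mp hball with h1 | h1
            · push_neg at h1
              linarith [hVrW z.1 h1, hVr0 z.2]
            · push_neg at h1
              linarith [hVrW z.2 h1, hVr0 z.1]
          have hfb : ∀ u, f z u ≤ ENNReal.ofReal 2
              + ENNReal.ofReal (β * Vr (T (y t) z.1 u))
              + ENNReal.ofReal (β * Vr (T (y t) z.2 u)) := by
            intro u
            rw [hfdef]
            simp only [if_neg hz]
            split
            · exact zero_le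
            · rw [hGsplit]
          calc ∫⁻ u, f z u ∂ν
              ≤ ∫⁻ u, (ENNReal.ofReal 2
                + ENNReal.ofReal (β * Vr (T (y t) z.1 u))
                + ENNReal.ofReal (β * Vr (T (y t) z.2 u))) ∂ν := lintegral_mono hfb
            _ = (∫⁻ _, (ENNReal.ofReal 2 : ℝ≥0∞) ∂ν)
                + (∫⁻ u, ENNReal.ofReal (β * Vr (T (y t) z.1 u)) ∂ν)
                + (∫⁻ u, ENNReal.ofReal (β * Vr (T (y t) z.2 u)) ∂ν) := by
                rw [lintegral_add_left (show Measurable fun u => ENNReal.ofReal 2 + ENNReal.ofReal (β * Vr (T (y t) z.1 u)) from measurable_const.add hg2m),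
                  lintegral_add_left measurable_const]
            _ ≤ ENNReal.ofReal 2 + ENNReal.ofReal (β * (γ * Vr z.1 + C))
                + ENNReal.ofReal (β * (γ * Vr z.2 + C)) := by
                rw [lintegral_const, measure_univ, mul_one]
                exact add_le_add (add_le_add le_rfl (hI2 t z.1)) (hI2 t z.2)
            _ = ENNReal.ofReal (2 + β * (γ * Vr z.1 + C) + β * (γ * Vr z.2 + C)) := by
                rw [← ENNReal.ofReal_add (by norm_num) (hβVC z.1),
                  ← ENNReal.ofReal_add (by linarith [hβVC z.1]) (hβVC z.2)]
            _ ≤ ENNReal.ofReal (ρ * (2 + β * (Vr z.1 + Vr z.2))) := by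
                apply ENNReal.ofReal_le_ofReal
                have hcross : (2 + 2*β*C + β*γ*(Vr z.1 + Vr z.2)) * (2 + β*Wb)
                    ≤ (2 + 2*β*C + β*γ*Wb) * (2 + β*(Vr z.1 + Vr z.2)) := by
                  have e1 : 0 ≤ β * ((Vr z.1 + Vr z.2) - Wb) :=
                    mul_nonneg hβ0.le (sub_nonneg.mpr hWle)
                  have e2 : (0:ℝ) ≤ 1 + β*C - γ := by
                    have := mul_nonneg hβ0.le hC0.le
                    linarith
                  linarith [mul_nonneg e1 e2]
                have h5 : 2 + 2*β*C + β*γ*(Vr z.1 + Vr z.2)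
                    ≤ ρ₂ * (2 + β*(Vr z.1 + Vr z.2)) := by
                  rw [hρ₂def, div_mul_eq_mul_div, le_div_iff₀ hden]
                  linarith [hcross]
                have h7 : ρ₂ * (2 + β*(Vr z.1 + Vr z.2)) ≤ ρ * (2 + β*(Vr z.1 + Vr z.2)) :=
                  mul_le_mul_of_nonneg_right hρ₂ρ
                    (by linarith [mul_nonneg hβ0.le hV0])
                have hId : 2 + β * (γ * Vr z.1 + C) + β * (γ * Vr z.2 + C)
                    = 2 + 2*β*C + β*γ*(Vr z.1 + Vr z.2) := by ring
                rw [hId]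
                linarith
            _ = ENNReal.ofReal ρ * G z := by
                rw [hGdef, ENNReal.ofReal_mul hρ0.le]
    haveI : IsProbabilityMeasure (P.map fun ω => (Zp θ₁ t ω, Zp θ₂ t ω)) :=
      Measure.isProbabilityMeasure_map hpairm.aemeasurable
    calc Φ (t+1) = ∫⁻ ω, f (Zp θ₁ t ω, Zp θ₂ t ω) (eps ((t:ℤ)+1) ω) ∂P := by
          rw [hΦdef]; exact lintegral_congr hptw
      _ = ∫⁻ q : (Ed d × Ed d) × ℝ, f q.1 q.2
            ∂(P.map fun ω => ((Zp θ₁ t ω, Zp θ₂ t ω), eps ((t:ℤ)+1) ω)) :=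
          (lintegral_map hfm (hpairm.prodMk (hεm _))).symm
      _ = ∫⁻ q : (Ed d × Ed d) × ℝ, f q.1 q.2
            ∂((P.map fun ω => (Zp θ₁ t ω, Zp θ₂ t ω)).prod ν) := by rw [hjoint]
      _ = ∫⁻ z, ∫⁻ u, f z u ∂ν ∂(P.map fun ω => (Zp θ₁ t ω, Zp θ₂ t ω)) :=
          lintegral_prod _ hfm.aemeasurable
      _ ≤ ∫⁻ z, ENNReal.ofReal ρ * (if z.1 = z.2 then 0 else G z)
            ∂(P.map fun ω => (Zp θ₁ t ω, Zp θ₂ t ω)) := lintegral_mono hinner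
      _ = ENNReal.ofReal ρ * ∫⁻ z, (if z.1 = z.2 then 0 else G z)
            ∂(P.map fun ω => (Zp θ₁ t ω, Zp θ₂ t ω)) := lintegral_const_mul _ hIm
      _ = ENNReal.ofReal ρ * Φ t := by
          rw [lintegral_map hIm hpairm, hΦdef]
  -- iterate
  have hiter : ∀ t, Φ t ≤ (ENNReal.ofReal ρ)^t * Φ 0 := by
    intro t
    induction t with
    | zero => simp
    | succ t ih =>
      calc Φ (t+1) ≤ ENNReal.ofReal ρ * Φ t := hstep t
        _ ≤ ENNReal.ofReal ρ * ((ENNReal.ofReal ρ)^t * Φ 0) := mul_le_mul_right ih _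
        _ = (ENNReal.ofReal ρ)^(t+1) * Φ 0 := by ring
  have hΦ0 : Φ 0 ≤ ENNReal.ofReal (2 + β * (Vr θ₁ + Vr θ₂)) := by
    rw [hΦdef]
    calc ∫⁻ ω, (if Zp θ₁ 0 ω = Zp θ₂ 0 ω then 0 else G (Zp θ₁ 0 ω, Zp θ₂ 0 ω)) ∂P
        ≤ ∫⁻ _, G (θ₁, θ₂) ∂P := by
          apply lintegral_mono
          intro ω
          simp only [hZ0]
          split
          · exact zero_le
          · exact le_rfl
      _ = G (θ₁, θ₂) := by rw [lintegral_const, measure_univ, mul_one]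
      _ = ENNReal.ofReal (2 + β * (Vr θ₁ + Vr θ₂)) := by rw [hGdef]
  have hDmeas : MeasurableSet {ω | Zp θ₁ n ω ≠ Zp θ₂ n ω} :=
    (measurableSet_eq_fun (hZm θ₁ n) (hZm θ₂ n)).compl
  have hVsum : 0 ≤ Vr θ₁ + Vr θ₂ := by linarith [hVr0 θ₁, hVr0 θ₂]
  have hPD : 2 * P {ω | Zp θ₁ n ω ≠ Zp θ₂ n ω} ≤ Φ n := by
    have hptw : ∀ ω, Set.indicator {ω | Zp θ₁ n ω ≠ Zp θ₂ n ω} (fun _ => (2:ℝ≥0∞)) ω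
        ≤ (if Zp θ₁ n ω = Zp θ₂ n ω then 0 else G (Zp θ₁ n ω, Zp θ₂ n ω)) := by
      intro ω
      by_cases h : Zp θ₁ n ω = Zp θ₂ n ω
      · simp [Set.indicator_apply, h]
      · have h2 : (2:ℝ≥0∞) ≤ G (Zp θ₁ n ω, Zp θ₂ n ω) := by
          rw [hGdef]
          rw [show (2:ℝ≥0∞) = ENNReal.ofReal 2 by norm_num]
          apply ENNReal.ofReal_le_ofReal
          have := mul_nonneg hβ0.le
            (add_nonneg (hVr0 (Zp θ₁ n ω)) (hVr0 (Zp θ₂ n ω)))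
          linarith
        simpa [Set.indicator_apply, h] using h2
    calc 2 * P {ω | Zp θ₁ n ω ≠ Zp θ₂ n ω}
        = ∫⁻ ω, Set.indicator {ω | Zp θ₁ n ω ≠ Zp θ₂ n ω} (fun _ => (2:ℝ≥0∞)) ω ∂P := by
          rw [lintegral_indicator hDmeas, setLIntegral_const]
      _ ≤ Φ n := by rw [hΦdef]; exact lintegral_mono hptw
  have hmain : 2 * P {ω | Zp θ₁ n ω ≠ Zp θ₂ n ω}
      ≤ ENNReal.ofReal (ρ^n * (2 + β * (Vr θ₁ + Vr θ₂))) := by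
    calc 2 * P {ω | Zp θ₁ n ω ≠ Zp θ₂ n ω} ≤ Φ n := hPD
      _ ≤ (ENNReal.ofReal ρ)^n * Φ 0 := hiter n
      _ ≤ (ENNReal.ofReal ρ)^n * ENNReal.ofReal (2 + β * (Vr θ₁ + Vr θ₂)) :=
          mul_le_mul_right hΦ0 _
      _ = ENNReal.ofReal (ρ^n * (2 + β * (Vr θ₁ + Vr θ₂))) := by
          rw [← ENNReal.ofReal_pow hρ0.le, ← ENNReal.ofReal_mul (pow_nonneg hρ0.le n)]
  have htR : (P {ω | Zp θ₁ n ω ≠ Zp θ₂ n ω}).toReal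
      ≤ ρ^n * (2 + β * (Vr θ₁ + Vr θ₂)) / 2 := by
    have h1 := ENNReal.toReal_mono (by exact ENNReal.ofReal_ne_top) hmain
    rw [ENNReal.toReal_mul,
      ENNReal.toReal_ofReal (mul_nonneg (pow_nonneg hρ0.le n)
        (by linarith [mul_nonneg hβ0.le hVsum]))] at h1
    have h2 : ((2:ℝ≥0∞)).toReal = 2 := by norm_num
    rw [h2] at h1
    linarith
  have hexp : Real.exp (-(-Real.log ρ) * (n:ℝ)) = ρ ^ n := by
    rw [neg_neg, mul_comm, Real.exp_nat_mul, Real.exp_log hρ0]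
  rw [hexp]
  have hρn : (0:ℝ) ≤ ρ ^ n := pow_nonneg hρ0.le n
  have h3 : 2 + β * (Vr θ₁ + Vr θ₂) ≤ Vr θ₁ + Vr θ₂ + 3 := by
    have := mul_le_mul_of_nonneg_right hβ1 hVsum
    linarith
  have h4 := mul_le_mul_of_nonneg_left h3 hρn
  linarith
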